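/- Let ρ = C(σ) × {0} + C(τ × {1}) be a relevant cone of a good subdivision Σ̃' of Σ̃, with (m_i, l_i) ∈ M × ℤ defining φ̃_i on ρ, and V_ρ = Span{(m_i, l_i - 1) | 1 ≤ i ≤ r} ⊆ M_ℝ × ℝ. Then ρ ∩ V_ρ^⊥ = C((σ̌(σ) + τ) × {1}), where σ̌(σ) = β₁*(σ) + ⋯ + β_r*(σ) with β_i*(σ) = {n ∈ σ | φ_i(n) = 1}. -/

import Mathlib

open scoped Pointwise

namespace BB

abbrev V (n : ℕ) : Type := Fin n → ℝ

/-- The standard pairing between `M_ℝ` and `N_ℝ` (both identified with `ℝⁿ`). -/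
def pair {n : ℕ} (m v : V n) : ℝ := ∑ i, m i * v i

/-- A point of `ℝⁿ` is a lattice point if all its coordinates are integers. -/
def IsLatticePt {n : ℕ} (m : V n) : Prop := ∀ i, ∃ z : ℤ, m i = (z : ℝ)

/-- A lattice polytope: convex hull of finitely many lattice points. -/
def IsLatticePolytope {n : ℕ} (P : Set (V n)) : Prop :=
  ∃ S : Finset (V n), (∀ m ∈ S, IsLatticePt m) ∧ P = convexHull ℝ (S : Set (V n))

/-- The polar dual `P* = {v | ⟨m,v⟩ ≥ -1 for all m ∈ P}`. -/
def polar {n : ℕ} (P : Set (V n)) : Set (V n) := {v | ∀ m ∈ P, -1 ≤ pair m v}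

/-- A reflexive polytope: a lattice polytope with `0` in its interior whose polar
dual is again a lattice polytope. -/
def IsReflexive {n : ℕ} (P : Set (V n)) : Prop :=
  IsLatticePolytope P ∧ (0 : V n) ∈ interior P ∧ IsLatticePolytope (polar P)

/-- The support function `supp P v = -inf{⟨m,v⟩ | m ∈ P}`; for `P = Δᵢ` and `v ∈ N_ℝ`
this is the piecewise linear function `φᵢ(v)` of the nef-partition. -/
noncomputable def supp {n : ℕ} (P : Set (V n)) (v : V n) : ℝ :=
  sSup ((fun m => -(pair m v)) '' P)

end BB


namespace BB

/-- The pairing on `(M_ℝ ⊕ ℝ) × (N_ℝ ⊕ ℝ)`. -/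
def pairP {n : ℕ} (p q : V n × ℝ) : ℝ := pair p.1 q.1 + p.2 * q.2

/-- The cone over a set, with vertex the origin: `C(S) = {c•s | c ≥ 0, s ∈ S}`. -/
def cone0 {E : Type*} [AddCommMonoid E] [Module ℝ E] (S : Set E) : Set E :=
  {x | ∃ c : ℝ, 0 ≤ c ∧ ∃ s ∈ S, x = c • s}

/-- `F` is a face of the convex set `P` (an exposed subset). -/
def IsFaceOf {E : Type*} [TopologicalSpace E] [AddCommMonoid E] [Module ℝ E]
    (F P : Set E) : Prop := IsExposed ℝ P F
section Aux
open Finset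

variable {n : ℕ}

lemma pair_add_right (m x y : V n) : pair m (x + y) = pair m x + pair m y := by
  simp [pair, mul_add, Finset.sum_add_distrib]

lemma pair_smul_right (m : V n) (c : ℝ) (x : V n) : pair m (c • x) = c * pair m x := by
  simp only [pair, Finset.mul_sum, Pi.smul_apply, smul_eq_mul]
  exact Finset.sum_congr rfl fun i _ => by ring

lemma pair_add_left (m x y : V n) : pair (m + x) y = pair m y + pair x y := by
  simp [pair, add_mul, Finset.sum_add_distrib]

lemma pair_smul_left (c : ℝ) (m x : V n) : pair (c • m) x = c * pair m x := by
  simp only [pair, Finset.mul_sum, Pi.smul_apply, smul_eq_mul]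
  exact Finset.sum_congr rfl fun i _ => by ring

lemma pair_zero_left (x : V n) : pair 0 x = 0 := by simp [pair]

lemma pair_zero_right (m : V n) : pair m 0 = 0 := by simp [pair]

lemma pair_sum_right {ι : Type*} (m : V n) (s : Finset ι) (f : ι → V n) :
    pair m (∑ i ∈ s, f i) = ∑ i ∈ s, pair m (f i) := by
  classical
  induction s using Finset.cons_induction with
  | empty => simp [pair]
  | cons a s ha ih => simp [Finset.sum_insert ha, pair_add_right, ih]

lemma pair_int {m v : V n} (hm : IsLatticePt m) (hv : IsLatticePt v) :
    ∃ z : ℤ, pair m v = (z : ℝ) := by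
  choose a ha using hm
  choose b hb using hv
  refine ⟨∑ i, a i * b i, ?_⟩
  rw [pair]
  push_cast
  exact Finset.sum_congr rfl fun i _ => by rw [ha, hb]

lemma isLinearMap_neg_pair (v : V n) : IsLinearMap ℝ (fun m => -(pair m v)) :=
  ⟨fun a b => by rw [pair_add_left]; ring,
   fun c a => by simp only [pair_smul_left, smul_eq_mul]; ring⟩

lemma bddAbove_supp_image (S : Finset (V n)) (v : V n) :
    BddAbove ((fun m => -(pair m v)) '' convexHull ℝ (S : Set (V n))) := by
  rcases S.eq_empty_or_nonempty with rfl | hS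
  · simp
  refine ⟨S.sup' hS (fun m => -(pair m v)), ?_⟩
  rintro x ⟨m, hm, rfl⟩
  have hsub : convexHull ℝ (S : Set (V n)) ⊆
      {w | -(pair w v) ≤ S.sup' hS (fun m => -(pair m v))} :=
    convexHull_min (fun w hw => by exact Finset.le_sup' (fun m => -(pair m v)) hw)
      (convex_halfSpace_le (isLinearMap_neg_pair v) _)
  exact hsub hm

lemma neg_pair_le_supp (S : Finset (V n)) (v : V n) {m : V n}
    (hm : m ∈ convexHull ℝ (S : Set (V n))) :
    -(pair m v) ≤ supp (convexHull ℝ (S : Set (V n))) v :=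
  le_csSup (bddAbove_supp_image S v) ⟨m, hm, rfl⟩

lemma supp_conv (S : Finset (V n)) (hS : S.Nonempty) (v : V n) :
    supp (convexHull ℝ (S : Set (V n))) v = S.sup' hS (fun m => -(pair m v)) := by
  apply le_antisymm
  · apply csSup_le
    · obtain ⟨m, hm⟩ := hS
      exact ⟨_, ⟨m, subset_convexHull ℝ _ hm, rfl⟩⟩
    · rintro x ⟨m, hm, rfl⟩
      have hsub : convexHull ℝ (S : Set (V n)) ⊆
          {w | -(pair w v) ≤ S.sup' hS (fun m => -(pair m v))} :=
        convexHull_min (fun w hw => by exact Finset.le_sup' (fun m => -(pair m v)) hw)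
          (convex_halfSpace_le (isLinearMap_neg_pair v) _)
      exact hsub hm
  · obtain ⟨m0, hm0, he⟩ := S.exists_mem_eq_sup' hS (fun m => -(pair m v))
    rw [he]
    exact neg_pair_le_supp S v (subset_convexHull ℝ _ hm0)

end Aux
section Aux2
open Finset

variable {n : ℕ}

lemma supp_conv_add (S T : Finset (V n)) (hS : S.Nonempty) (hT : T.Nonempty) (v : V n) :
    supp (convexHull ℝ (S : Set (V n)) + convexHull ℝ (T : Set (V n))) v
      = supp (convexHull ℝ (S : Set (V n))) v + supp (convexHull ℝ (T : Set (V n))) v := by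
  classical
  rw [← convexHull_add, ← Finset.coe_add, supp_conv _ (hS.add hT), supp_conv _ hS, supp_conv _ hT]
  apply le_antisymm
  · apply Finset.sup'_le
    intro m hm
    rw [Finset.mem_add] at hm
    obtain ⟨a, ha, b, hb, rfl⟩ := hm
    rw [pair_add_left, neg_add]
    exact add_le_add (Finset.le_sup' (fun m => -(pair m v)) ha) (Finset.le_sup' (fun m => -(pair m v)) hb)
  · obtain ⟨a, ha, hea⟩ := S.exists_mem_eq_sup' hS (fun m => -(pair m v))
    obtain ⟨b, hb, heb⟩ := T.exists_mem_eq_sup' hT (fun m => -(pair m v))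
    rw [hea, heb]
    have : -(pair a v) + -(pair b v) = -(pair (a + b) v) := by rw [pair_add_left]; ring
    rw [this]
    exact Finset.le_sup' (fun m => -(pair m v)) (Finset.add_mem_add ha hb)

lemma conv_sum {ι : Type*} (s : Finset ι) (S : ι → Finset (V n)) :
    ∑ i ∈ s, convexHull ℝ ((S i : Set (V n))) = convexHull ℝ ((↑(∑ i ∈ s, S i) : Set (V n))) := by
  classical
  induction s using Finset.cons_induction with
  | empty => simp [convexHull_singleton]
  | cons a s ha ih =>
      rw [Finset.sum_cons, Finset.sum_cons, ih, ← convexHull_add, Finset.coe_add]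

lemma finset_sum_nonempty {ι : Type*} (s : Finset ι) (S : ι → Finset (V n))
    (h : ∀ i ∈ s, (S i).Nonempty) : (∑ i ∈ s, S i).Nonempty := by
  classical
  induction s using Finset.cons_induction with
  | empty => exact ⟨0, by simp⟩
  | cons a s ha ih =>
      rw [Finset.sum_cons]
      exact (h a (by simp)).add (ih fun i hi => h i (by simp [hi]))

lemma supp_sum {ι : Type*} (s : Finset ι) (S : ι → Finset (V n))
    (h : ∀ i ∈ s, (S i).Nonempty) (v : V n) :
    supp (∑ i ∈ s, convexHull ℝ ((S i : Set (V n)))) v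
      = ∑ i ∈ s, supp (convexHull ℝ ((S i : Set (V n)))) v := by
  classical
  induction s using Finset.cons_induction with
  | empty =>
      simp only [Finset.sum_empty]
      have : ((0 : Set (V n)) : Set (V n)) = {0} := rfl
      rw [this, supp]
      simp [pair_zero_left]
  | cons a s ha ih =>
      rw [Finset.sum_cons, Finset.sum_cons, conv_sum,
        supp_conv_add _ _ (h a (by simp)) (finset_sum_nonempty _ _ fun i hi => h i (by simp [hi])),
        ← conv_sum, ih fun i hi => h i (by simp [hi])]

end Aux2
section Aux3
open Finset

variable {n : ℕ}

lemma continuous_neg_pair (m : V n) : Continuous (fun v : V n => -(pair m v)) := by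
  apply Continuous.neg
  exact continuous_finset_sum _ fun i _ => (continuous_const.mul (continuous_apply i))

lemma continuous_sup'_neg_pair (S : Finset (V n)) (hS : S.Nonempty) :
    Continuous (fun v : V n => S.sup' hS (fun m => -(pair m v))) :=
  Continuous.finset_sup'_apply hS fun m _ => continuous_neg_pair m

lemma polar_eq_supp_le (T : Finset (V n)) (hT : T.Nonempty) (Δ : Set (V n))
    (hΔ : Δ = convexHull ℝ (T : Set (V n))) :
    polar Δ = {v | supp Δ v ≤ 1} := by
  ext v
  constructor
  · intro hv
    show supp Δ v ≤ 1
    rw [hΔ]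
    obtain ⟨m0, hm0⟩ := hT
    refine csSup_le ⟨_, ⟨m0, subset_convexHull ℝ _ hm0, rfl⟩⟩ ?_
    rintro x ⟨m, hm, rfl⟩
    have := hv m (hΔ ▸ hm)
    dsimp only
    linarith
  · intro hv m hm
    have h1 : -(pair m v) ≤ supp Δ v := by
      rw [hΔ] at hm ⊢
      exact neg_pair_le_supp T v hm
    have : supp Δ v ≤ 1 := hv
    linarith

lemma supp_one_of_frontier (T : Finset (V n)) (hT : T.Nonempty) (Δ : Set (V n))
    (hΔ : Δ = convexHull ℝ (T : Set (V n))) {y : V n}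
    (hy : y ∈ frontier (polar Δ)) : supp Δ y = 1 := by
  have hcont : Continuous (supp Δ) := by
    have : supp Δ = fun v => T.sup' hT (fun m => -(pair m v)) := by
      funext v; rw [hΔ, supp_conv T hT]
    rw [this]
    exact continuous_sup'_neg_pair T hT
  have hpol : polar Δ = supp Δ ⁻¹' (Set.Iic 1) := polar_eq_supp_le T hT Δ hΔ
  have hclosed : IsClosed (polar Δ) := by
    rw [hpol]; exact isClosed_Iic.preimage hcont
  have hle : supp Δ y ≤ 1 := by
    have : y ∈ polar Δ := by
      rw [← hclosed.closure_eq]; exact frontier_subset_closure hy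
    rw [hpol] at this; exact this
  refine le_antisymm hle ?_
  by_contra h
  push_neg at h
  have : y ∈ interior (polar Δ) := by
    rw [mem_interior]
    exact ⟨supp Δ ⁻¹' (Set.Iio 1), by rw [hpol]; exact Set.preimage_mono Set.Iio_subset_Iic_self,
      isOpen_Iio.preimage hcont, h⟩
  exact hy.2 this

end Aux3
section Aux4
open Finset

variable {n : ℕ}

lemma supp_extreme_one (hn : 0 < n) (T : Finset (V n)) (hT : T.Nonempty) (Δ : Set (V n))
    (hΔ : Δ = convexHull ℝ (T : Set (V n))) (h0 : (0 : V n) ∈ Δ) {e : V n}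
    (he : e ∈ (polar Δ).extremePoints ℝ) : supp Δ e = 1 := by
  obtain ⟨heP, hext⟩ := he
  set c := supp Δ e with hc
  have hbdd : BddAbove ((fun m => -(pair m e)) '' Δ) := by rw [hΔ]; exact bddAbove_supp_image T e
  have hc1 : c ≤ 1 := by
    have := (polar_eq_supp_le T hT Δ hΔ) ▸ heP
    exact this
  have hc0 : 0 ≤ c := by
    have : -(pair 0 e) ≤ c := le_csSup hbdd ⟨0, h0, rfl⟩
    rw [pair_zero_left] at this; linarith
  have hkey : ∀ m ∈ Δ, -c ≤ pair m e := by
    intro m hm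
    have : -(pair m e) ≤ c := le_csSup hbdd ⟨m, hm, rfl⟩
    linarith
  by_contra hne1
  have hlt : c < 1 := lt_of_le_of_ne hc1 hne1
  rcases eq_or_ne e 0 with rfl | hne
  · -- e = 0 : not an extreme point since polar contains a small ball
    set i0 : Fin n := ⟨0, hn⟩
    have hbound : ∀ m ∈ Δ, |m i0| ≤ 1 + T.sup' hT (fun t => |t i0|) := by
      intro m hm
      set R := T.sup' hT (fun t => |t i0|) with hR
      have h1 : convexHull ℝ (T : Set (V n)) ⊆ {w : V n | w i0 ≤ 1 + R} := by
        apply convexHull_min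
        · intro w hw
          have : |w i0| ≤ R := Finset.le_sup' (fun t => |t i0|) hw
          have := abs_le.1 this
          simp only [Set.mem_setOf_eq]; linarith
        · exact convex_halfSpace_le ⟨fun a b => rfl, fun cc a => rfl⟩ _
      have h2 : convexHull ℝ (T : Set (V n)) ⊆ {w : V n | -(1 + R) ≤ w i0} := by
        apply convexHull_min
        · intro w hw
          have : |w i0| ≤ R := Finset.le_sup' (fun t => |t i0|) hw
          have := abs_le.1 this
          simp only [Set.mem_setOf_eq]; linarith
        · exact convex_halfSpace_ge ⟨fun a b => rfl, fun cc a => rfl⟩ _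
      rw [hΔ] at hm
      have := h1 hm
      have := h2 hm
      rw [abs_le]
      constructor <;> [skip; skip] <;> simp only [Set.mem_setOf_eq] at * <;> linarith
    set R1 := 1 + T.sup' hT (fun t => |t i0|) with hR1
    have hR1pos : 0 < R1 := by
      obtain ⟨t0, ht0⟩ := id hT
      have h1 : |t0 i0| ≤ T.sup' hT (fun t => |t i0|) := Finset.le_sup' (fun t => |t i0|) ht0
      have h2 := abs_nonneg (t0 i0)
      rw [hR1]; linarith
    set x : V n := (fun j => if j = i0 then R1⁻¹ else 0) with hx
    have hpairx : ∀ m : V n, pair m x = R1⁻¹ * m i0 := by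
      intro m
      rw [pair, Finset.sum_eq_single i0]
      · rw [hx]; simp [mul_comm]
      · intro b _ hb; rw [hx]; simp [hb]
      · intro h; exact absurd (Finset.mem_univ i0) h
    have hpairx' : ∀ m : V n, pair m (-x) = -(R1⁻¹ * m i0) := by
      intro m
      have : pair m (-x) = -(pair m x) := by
        simp [pair, mul_neg, ← Finset.sum_neg_distrib]
      rw [this, hpairx]
    have hxP : x ∈ polar Δ := by
      intro m hm
      rw [hpairx]
      have h2 := (abs_le.1 (hbound m hm)).1
      have h3 : -(R1⁻¹ * R1) ≤ R1⁻¹ * m i0 := by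
        rw [← mul_neg]
        exact mul_le_mul_of_nonneg_left (by linarith) (inv_nonneg.2 hR1pos.le)
      rw [inv_mul_cancel₀ hR1pos.ne'] at h3
      linarith
    have hxP' : -x ∈ polar Δ := by
      intro m hm
      rw [hpairx']
      have h2 := (abs_le.1 (hbound m hm)).2
      have h3 : R1⁻¹ * m i0 ≤ R1⁻¹ * R1 :=
        mul_le_mul_of_nonneg_left (by linarith) (inv_nonneg.2 hR1pos.le)
      rw [inv_mul_cancel₀ hR1pos.ne'] at h3
      linarith
    have hxne : x ≠ 0 := by
      intro h
      have h1 := congrFun h i0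
      rw [hx] at h1
      simp at h1
      exact absurd h1 hR1pos.ne'
    have h0seg : (0 : V n) ∈ openSegment ℝ (-x) x := by
      refine ⟨1/2, 1/2, by norm_num, by norm_num, by norm_num, ?_⟩
      ext i; simp
    have hx0 := neg_eq_zero.1 (hext hxP' hxP h0seg)
    exact hxne hx0
  · -- e ≠ 0
    set ε : ℝ := (1 - c) / 2 with hε
    have hεpos : 0 < ε := by rw [hε]; linarith
    have hu1 : (1 + ε) • e ∈ polar Δ := by
      intro m hm
      rw [pair_smul_right]
      have h1 := hkey m hm
      have : (1 + ε) * (-c) ≤ (1 + ε) * pair m e :=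
        mul_le_mul_of_nonneg_left h1 (by linarith)
      nlinarith
    have hu2 : (1 - ε) • e ∈ polar Δ := by
      intro m hm
      rw [pair_smul_right]
      have h1 := hkey m hm
      have hε2 : ε ≤ 1 := by rw [hε]; linarith
      have : (1 - ε) * (-c) ≤ (1 - ε) * pair m e :=
        mul_le_mul_of_nonneg_left h1 (by linarith)
      nlinarith
    have heseg : e ∈ openSegment ℝ ((1 - ε) • e) ((1 + ε) • e) := by
      refine ⟨1/2, 1/2, by norm_num, by norm_num, by norm_num, ?_⟩
      rw [smul_smul, smul_smul, ← add_smul]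
      have : (1/2 * (1 - ε) + 1/2 * (1 + ε)) = (1 : ℝ) := by ring
      rw [this, one_smul]
    have hx0 := hext hu1 hu2 (by rw [openSegment_symm]; exact heseg)
    have : ε • e = 0 := by
      have h := sub_eq_zero.2 hx0
      have : ((1 + ε) - 1) • e = 0 := by rw [sub_smul, one_smul, h]
      simpa using this
    rcases smul_eq_zero.1 this with h | h
    · exact hεpos.ne' h
    · exact hne h

end Aux4

theorem stmt14 {n r : ℕ} (Δ : Set (V n)) (D : Fin r → Set (V n))
    (hΔrefl : IsReflexive Δ)
    (hDlat : ∀ i, IsLatticePolytope (D i))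
    (hΔ : Δ = ∑ i, D i)
    (E : Finset (V n))
    (hE : (E : Set (V n)) = Set.extremePoints ℝ (polar Δ))
    (hnef : ∀ i, ∀ e ∈ E, supp (D i) e = 0 ∨ supp (D i) e = 1)
    (Nb : Fin r → Set (V n))
    (hNb : ∀ i, Nb i = convexHull ℝ ({0} ∪ {e : V n | e ∈ E ∧ supp (D i) e = 1}))
    -- ȟ' convex positively homogeneous piecewise linear, with Newton polytope ∇^{ȟ'}
    (hk : V n → ℝ) (FF : Finset (V n)) (hFF : FF.Nonempty)
    (hpl : ∀ x, hk x = FF.sup' hFF fun f => -(pair x f))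
    (Q : Set (V n)) (hQ : Q = {v : V n | ∀ m, -(hk m) ≤ pair m v})
    -- ρ = C(σ)×{0} + C(τ×{1}) a relevant cone of a good subdivision Σ̃' of Σ̃:
    -- σ ⊆ ∂Δ* a lattice polytope, τ ⊆ ∂∇^{ȟ'}, σ + τ contained in a face of
    -- Δ* + ∇^{ȟ'}, and σ̌(σ) ≠ ∅
    (σ τ : Set (V n))
    (hσbd : σ ⊆ frontier (polar Δ))
    (hσpoly : ∃ S : Finset (V n), (∀ x ∈ S, IsLatticePt x) ∧ σ = convexHull ℝ (S : Set (V n)))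
    (hτbd : τ ⊆ frontier Q)
    (hτconv : Convex ℝ τ)
    (hfc : ∃ Fc : Set (V n), IsFaceOf Fc (polar Δ + Q) ∧ σ + τ ⊆ Fc)
    (hrel : ∀ i, {x ∈ σ | supp (D i) x = 1}.Nonempty)
    -- (mᵢ, lᵢ) ∈ M × ℤ defining φ̃ᵢ on ρ: φ̃ᵢ(x,0) = φᵢ(x) on C(σ), φ̃ᵢ(t,1) = 0 on τ
    (mi : Fin r → V n) (li : Fin r → ℝ)
    (hmlat : ∀ i, IsLatticePt (mi i)) (hllat : ∀ i, ∃ z : ℤ, li i = (z : ℝ))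
    (hmi : ∀ i, ∀ x ∈ σ, pair (mi i) x = supp (D i) x)
    (hli : ∀ i, ∀ t ∈ τ, pair (mi i) t + li i = 0) :
    -- ρ ∩ V_ρ^⊥ = C((σ̌(σ) + τ) × {1}), where V_ρ = Span{(mᵢ, lᵢ - 1)}
    (cone0 (σ ×ˢ ({0} : Set ℝ)) + cone0 (τ ×ˢ ({1} : Set ℝ)))
      ∩ {p : V n × ℝ | ∀ i, pairP (mi i, li i - 1) p = 0}
      = cone0 (((∑ i, {x ∈ σ | supp (D i) x = 1}) + τ) ×ˢ ({1} : Set ℝ)) := by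
  classical
  -- trivial case n = 0
  rcases Nat.eq_zero_or_pos n with hn | hn
  · subst hn
    have hcone_empty : ∀ (W : Set (V 0 × ℝ)), W = ∅ → cone0 W = ∅ := by
      rintro W rfl; ext x; simp [cone0]
    have hτe : τ = ∅ := by
      have hQu : Q = Set.univ := by
        rw [hQ]; apply Set.eq_univ_of_forall
        intro v m
        have h1 : pair m v = 0 := by simp [pair]
        have h2 : hk m = 0 := by
          rw [hpl m]
          have he : (fun f => -(pair m f)) = fun _ : V 0 => (0 : ℝ) := by
            funext f; simp [pair]
          rw [he, Finset.sup'_const]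
        rw [h1, h2]; norm_num
      rw [hQu, frontier_univ] at hτbd
      exact Set.subset_eq_empty hτbd rfl
    rw [hτe]
    have h1 : cone0 ((∅ : Set (V 0)) ×ˢ ({1} : Set ℝ)) = ∅ := hcone_empty _ Set.empty_prod
    have h2 : cone0 ((((∑ i, {x ∈ σ | supp (D i) x = 1}) + (∅ : Set (V 0)))) ×ˢ ({1} : Set ℝ)) = ∅ :=
      hcone_empty _ (by rw [Set.add_empty, Set.empty_prod])
    rw [h1, h2]
    simp [Set.add_empty]
  -- trivial case r = 0
  rcases Nat.eq_zero_or_pos r with hr | hr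
  · exfalso
    have hΔ0 : Δ = {0} := by
      rw [hΔ]
      have : (Finset.univ : Finset (Fin r)) = ∅ := by
        subst hr; exact Finset.univ_eq_empty
      rw [this, Finset.sum_empty]
      rfl
    have h0i : (0 : V n) ∈ interior ({(0 : V n)} : Set (V n)) := hΔ0 ▸ hΔrefl.2.1
    obtain ⟨ε, hε, hball⟩ := Metric.mem_nhds_iff.1 (mem_interior_iff_mem_nhds.1 h0i)
    haveI : Nonempty (Fin n) := ⟨⟨0, hn⟩⟩
    set z : V n := fun _ => ε / 2 with hz
    have hzb : z ∈ Metric.ball (0 : V n) ε := by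
      rw [Metric.mem_ball, dist_zero_right]
      have : ‖z‖ = ‖(ε / 2 : ℝ)‖ := pi_norm_const _
      rw [this, Real.norm_eq_abs, abs_of_pos (by linarith)]
      linarith
    have hz0 : z = 0 := hball hzb
    have := congrFun hz0 ⟨0, hn⟩
    rw [hz] at this
    simp at this
    linarith

  -- Main case: n ≥ 1, r ≥ 1.
  obtain ⟨S, hSprop⟩ := Classical.axiomOfChoice hDlat
  have hSlat : ∀ i, ∀ m ∈ S i, IsLatticePt m := fun i => (hSprop i).1
  have hSD : ∀ i, D i = convexHull ℝ ((S i : Set (V n))) := fun i => (hSprop i).2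
  have h0Δ : (0 : V n) ∈ Δ := interior_subset hΔrefl.2.1
  have hDne : ∀ i, (D i).Nonempty := by
    intro i
    have h0 := h0Δ
    rw [hΔ, Set.mem_fintype_sum] at h0
    obtain ⟨g, hg, -⟩ := h0
    exact ⟨g i, hg i⟩
  have hSne : ∀ i, (S i).Nonempty := by
    intro i
    rw [Finset.nonempty_iff_ne_empty]
    intro h
    obtain ⟨m, hm⟩ := hDne i
    rw [hSD i, h] at hm
    simp at hm
  have hΔT : Δ = convexHull ℝ ((↑(∑ i, S i) : Set (V n))) := by
    rw [hΔ]
    have : ∀ i : Fin r, D i = convexHull ℝ ((S i : Set (V n))) := hSD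
    calc ∑ i, D i = ∑ i, convexHull ℝ ((S i : Set (V n))) := Finset.sum_congr rfl fun i _ => hSD i
      _ = convexHull ℝ ((↑(∑ i, S i) : Set (V n))) := conv_sum _ _
  have hTne : (∑ i, S i).Nonempty := finset_sum_nonempty _ _ fun i _ => hSne i
  have hfront : ∀ y ∈ frontier (polar Δ), supp Δ y = 1 :=
    fun y hy => supp_one_of_frontier _ hTne Δ hΔT hy
  have hsum : ∀ v, supp Δ v = ∑ i, supp (D i) v := by
    intro v
    calc supp Δ v = supp (∑ i, convexHull ℝ ((S i : Set (V n)))) v := by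
          rw [hΔ]
          congr 1
          exact Finset.sum_congr rfl fun i _ => hSD i
      _ = ∑ i, supp (convexHull ℝ ((S i : Set (V n)))) v := supp_sum _ _ (fun i _ => hSne i) v
      _ = ∑ i, supp (D i) v := Finset.sum_congr rfl fun i _ => by rw [hSD i]
  have hext1 : ∀ e ∈ E, supp Δ e = 1 := by
    intro e he
    exact supp_extreme_one hn _ hTne Δ hΔT h0Δ (by rw [← hE]; exact_mod_cast he)
  -- polar Δ is the convex hull of E
  obtain ⟨SP, hSPlat, hSPconv⟩ := hΔrefl.2.2
  have hPcomp : IsCompact (polar Δ) := by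
    rw [hSPconv]; exact SP.finite_toSet.isCompact_convexHull ℝ
  have hPconvex : Convex ℝ (polar Δ) := by rw [hSPconv]; exact convex_convexHull ℝ _
  have hPE : polar Δ = convexHull ℝ (E : Set (V n)) := by
    have hkm := closure_convexHull_extremePoints hPcomp hPconvex
    rw [← hE] at hkm
    rw [← hkm, (E.finite_toSet.isClosed_convexHull ℝ).closure_eq]
  have hPclosed : IsClosed (polar Δ) := hPcomp.isClosed
  -- nonnegativity of the φᵢ on the boundary of the polar
  have hnonneg : ∀ y ∈ frontier (polar Δ), ∀ i, 0 ≤ supp (D i) y := by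
    intro y hy i
    have hyP : y ∈ polar Δ := by
      rw [← hPclosed.closure_eq]; exact frontier_subset_closure hy
    rw [hPE, Finset.convexHull_eq] at hyP
    obtain ⟨w, hw0, hw1, hwy⟩ := hyP
    rw [Finset.centerMass_eq_of_sum_1 _ _ hw1] at hwy
    simp only [id] at hwy
    have hb : ∀ j, supp (D j) y ≤ ∑ e ∈ E, w e * supp (D j) e := by
      intro j
      rw [hSD j, supp_conv _ (hSne j)]
      apply Finset.sup'_le
      intro m hm
      have hrw : -(pair m y) = ∑ e ∈ E, w e * (-(pair m e)) := by
        rw [← hwy, pair_sum_right]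
        rw [← Finset.sum_neg_distrib]
        exact Finset.sum_congr rfl fun e _ => by rw [pair_smul_right]; ring
      rw [hrw]
      apply Finset.sum_le_sum
      intro e heE
      have h2 : -(pair m e) ≤ supp (convexHull ℝ ((S j : Set (V n)))) e :=
        neg_pair_le_supp _ _ (subset_convexHull ℝ _ hm)
      exact mul_le_mul_of_nonneg_left h2 (hw0 e heE)
    have hs1 : ∑ j, supp (D j) y = ∑ j, ∑ e ∈ E, w e * supp (D j) e := by
      rw [← hsum y, hfront y hy, Finset.sum_comm]
      calc (1:ℝ) = ∑ e ∈ E, w e := hw1.symm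
        _ = ∑ e ∈ E, ∑ j, w e * supp (D j) e := by
            apply Finset.sum_congr rfl
            intro e heE
            rw [← Finset.mul_sum, ← hsum e, hext1 e heE, mul_one]
    have heq := (Finset.sum_eq_sum_iff_of_le fun j (_ : j ∈ Finset.univ) => hb j).1 hs1 i
      (Finset.mem_univ i)
    rw [heq]
    apply Finset.sum_nonneg
    intro e heE
    rcases hnef i e heE with h | h <;> rw [h]
    · simp
    · rw [mul_one]; exact hw0 e heE

  obtain ⟨Sσ, hSσlat, hσconv⟩ := hσpoly
  have vmemσ : ∀ v ∈ Sσ, v ∈ σ := fun v hv => by rw [hσconv]; exact subset_convexHull ℝ _ hv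
  have hσconvex : Convex ℝ σ := by rw [hσconv]; exact convex_convexHull ℝ _
  have hsumσ : ∀ x ∈ σ, ∑ i, supp (D i) x = 1 := fun x hx => by
    rw [← hsum x]; exact hfront x (hσbd hx)
  have hnnσ : ∀ x ∈ σ, ∀ i, 0 ≤ supp (D i) x := fun x hx i => hnonneg x (hσbd hx) i
  have h01v : ∀ v ∈ Sσ, ∀ i, supp (D i) v = 0 ∨ supp (D i) v = 1 := by
    intro v hv i
    have hvσ := vmemσ v hv
    have h0 := hnnσ v hvσ i
    have h1 : supp (D i) v ≤ 1 := by
      have hs := hsumσ v hvσ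
      have hle : supp (D i) v ≤ ∑ j, supp (D j) v :=
        Finset.single_le_sum (fun j _ => hnnσ v hvσ j) (Finset.mem_univ i)
      linarith
    obtain ⟨z, hz⟩ : ∃ z : ℤ, supp (D i) v = (z : ℝ) := by
      obtain ⟨z, hz⟩ := pair_int (hmlat i) (hSσlat v hv)
      exact ⟨z, by rw [← hmi i v hvσ, hz]⟩
    rw [hz] at h0 h1 ⊢
    have hzor : z = 0 ∨ z = 1 := by
      have hz0 : (0 : ℤ) ≤ z := by exact_mod_cast h0
      have hz1 : z ≤ 1 := by exact_mod_cast h1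
      omega
    rcases hzor with h | h <;> rw [h] <;> simp
  have hδ : ∀ (yy : V n), yy ∈ σ → ∀ j, supp (D j) yy = 1 →
      ∀ i, i ≠ j → supp (D i) yy = 0 := by
    intro yy hyy j hj i hij
    have hs := hsumσ yy hyy
    have h1 : ∑ k ∈ Finset.univ.erase j, supp (D k) yy = 0 := by
      have h2 := Finset.add_sum_erase Finset.univ (fun k => supp (D k) yy) (Finset.mem_univ j)
      rw [hj] at h2
      linarith
    exact (Finset.sum_eq_zero_iff_of_nonneg fun k _ => hnnσ yy hyy k).1 h1 i
      (Finset.mem_erase.2 ⟨hij, Finset.mem_univ i⟩)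
  have hrR : (0:ℝ) < (r:ℝ) := by exact_mod_cast hr
  ext p
  simp only [Set.mem_inter_iff, Set.mem_setOf_eq]
  constructor
  · rintro ⟨hpadd, hperp⟩
    rw [Set.mem_add] at hpadd
    obtain ⟨q1, hq1, q2, hq2, hpq⟩ := hpadd
    obtain ⟨a, ha, ⟨x, x2⟩, hxmem, rfl⟩ := hq1
    obtain ⟨b, hb, ⟨t, t2⟩, htmem, rfl⟩ := hq2
    obtain ⟨hxσ, hx2⟩ := hxmem
    obtain ⟨htτ, ht2⟩ := htmem
    rw [Set.mem_singleton_iff] at hx2 ht2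
    subst hx2; subst ht2
    subst hpq
    have hp1 : a • ((x, (0:ℝ)) : V n × ℝ) + b • ((t, (1:ℝ)) : V n × ℝ) = (a • x + b • t, b) := by
      simp [Prod.ext_iff]
    have hcond : ∀ i, a * supp (D i) x = b := by
      intro i
      have h := hperp i
      rw [hp1] at h
      simp only [pairP] at h
      rw [pair_add_right, pair_smul_right, pair_smul_right, hmi i x hxσ] at h
      have h2 := hli i t htτ
      have h3 : pair (mi i) t = -(li i) := by linarith
      rw [h3] at h
      ring_nf at h
      linarith
    have hsum1 : ∑ j, supp (D j) x = 1 := hsumσ x hxσ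
    have harb : a = (r:ℝ) * b := by
      have h1 : ∑ j, (a * supp (D j) x) = ∑ _j : Fin r, b :=
        Finset.sum_congr rfl fun j _ => hcond j
      rw [← Finset.mul_sum, hsum1, mul_one, Finset.sum_const, Finset.card_univ,
        Fintype.card_fin, nsmul_eq_mul] at h1
      exact h1
    rcases eq_or_lt_of_le hb with hb0 | hbpos
    · have ha0 : a = 0 := by rw [harb, ← hb0, mul_zero]
      choose y0 hy0 using hrel
      refine ⟨0, le_refl 0, ((∑ i, y0 i) + t, 1), ⟨?_, rfl⟩, ?_⟩
      · exact Set.add_mem_add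
          (Set.finset_sum_mem_finset_sum _ _ _ fun i _ => hy0 i) htτ
      · rw [ha0, ← hb0]
        simp
    · have hφx : ∀ i, supp (D i) x = 1 / (r:ℝ) := by
        intro i
        have h := hcond i
        rw [harb] at h
        have h2 : b * ((r:ℝ) * supp (D i) x) = b * 1 := by ring_nf; ring_nf at h; linarith
        have h3 := mul_left_cancel₀ (ne_of_gt hbpos) h2
        rw [eq_div_iff (ne_of_gt hrR)]
        linarith
      have hxc : x ∈ convexHull ℝ (Sσ : Set (V n)) := by rw [← hσconv]; exact hxσ
      rw [Finset.convexHull_eq] at hxc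
      obtain ⟨w, hw0, hw1, hwx⟩ := hxc
      rw [Finset.centerMass_eq_of_sum_1 _ _ hw1] at hwx
      simp only [id] at hwx
      have hApre : ∀ i, ∑ v ∈ Sσ, w v * supp (D i) v = 1 / (r:ℝ) := by
        intro i
        have h1 : pair (mi i) x = ∑ v ∈ Sσ, w v * pair (mi i) v := by
          rw [← hwx, pair_sum_right]
          exact Finset.sum_congr rfl fun v _ => pair_smul_right _ _ _
        rw [hmi i x hxσ, hφx i] at h1
        calc ∑ v ∈ Sσ, w v * supp (D i) v
            = ∑ v ∈ Sσ, w v * pair (mi i) v :=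
              Finset.sum_congr rfl fun v hv => by rw [hmi i v (vmemσ v hv)]
          _ = 1 / (r:ℝ) := h1.symm
      set u : Fin r → V n := fun i => ∑ v ∈ Sσ, ((r:ℝ) * w v * supp (D i) v) • v with hu
      have hAi : ∀ i, ∑ v ∈ Sσ, (r:ℝ) * w v * supp (D i) v = 1 := by
        intro i
        have hr2 : ∑ v ∈ Sσ, (r:ℝ) * w v * supp (D i) v
            = (r:ℝ) * ∑ v ∈ Sσ, w v * supp (D i) v := by
          rw [Finset.mul_sum]; exact Finset.sum_congr rfl fun v _ => by ring
        rw [hr2, hApre i]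
        field_simp
      have huσ : ∀ i, u i ∈ σ := by
        intro i
        refine hσconvex.sum_mem (fun v hv => ?_) (hAi i) (fun v hv => vmemσ v hv)
        exact mul_nonneg (mul_nonneg hrR.le (hw0 v hv)) (hnnσ v (vmemσ v hv) i)
      have huφ : ∀ i, supp (D i) (u i) = 1 := by
        intro i
        rw [← hmi i (u i) (huσ i)]
        have hpr : pair (mi i) (u i)
            = ∑ v ∈ Sσ, ((r:ℝ) * w v * supp (D i) v) * pair (mi i) v := by
          rw [hu]
          rw [pair_sum_right]
          exact Finset.sum_congr rfl fun v _ => pair_smul_right _ _ _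
        rw [hpr]
        calc ∑ v ∈ Sσ, ((r:ℝ) * w v * supp (D i) v) * pair (mi i) v
            = ∑ v ∈ Sσ, (r:ℝ) * w v * supp (D i) v := by
              apply Finset.sum_congr rfl
              intro v hv
              rw [hmi i v (vmemσ v hv)]
              rcases h01v v hv i with h | h <;> rw [h] <;> ring
          _ = 1 := hAi i
      have husum : ∑ i, u i = (r:ℝ) • x := by
        calc ∑ i, u i
            = ∑ v ∈ Sσ, ∑ i : Fin r, ((r:ℝ) * w v * supp (D i) v) • v := by
              rw [hu]; exact Finset.sum_comm
          _ = ∑ v ∈ Sσ, (∑ i : Fin r, (r:ℝ) * w v * supp (D i) v) • v := by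
              exact Finset.sum_congr rfl fun v _ => (Finset.sum_smul).symm
          _ = ∑ v ∈ Sσ, ((r:ℝ) * w v) • v := by
              apply Finset.sum_congr rfl
              intro v hv
              congr 1
              have : ∑ i : Fin r, (r:ℝ) * w v * supp (D i) v
                  = (r:ℝ) * w v * ∑ i, supp (D i) v := by
                rw [Finset.mul_sum]
              rw [this, hsumσ v (vmemσ v hv), mul_one]
          _ = (r:ℝ) • ∑ v ∈ Sσ, w v • v := by
              rw [Finset.smul_sum]
              exact Finset.sum_congr rfl fun v _ => (smul_smul _ _ _).symm
          _ = (r:ℝ) • x := by rw [hwx]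
      refine ⟨b, le_of_lt hbpos, ((∑ i, u i) + t, 1), ⟨?_, rfl⟩, ?_⟩
      · exact Set.add_mem_add
          (Set.finset_sum_mem_finset_sum _ _ _ fun i _ => ⟨huσ i, huφ i⟩) htτ
      · rw [hp1]
        have hb1 : b • ((((∑ i, u i) + t), (1:ℝ)) : V n × ℝ)
            = (b • (∑ i, u i) + b • t, b) := by
          simp [Prod.ext_iff, smul_add]
        rw [hb1, husum, smul_smul, Prod.mk.injEq]
        refine ⟨?_, rfl⟩
        rw [harb, mul_comm (r:ℝ) b]
  · rintro ⟨c, hc, ⟨u, o⟩, ⟨humem, ho⟩, rfl⟩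
    rw [Set.mem_singleton_iff] at ho
    subst ho
    rw [Set.mem_add] at humem
    obtain ⟨s1, hs1, t, htτ, rfl⟩ := humem
    rw [Set.mem_fintype_sum] at hs1
    obtain ⟨y, hy, rfl⟩ := hs1
    have hyσ : ∀ i, y i ∈ σ := fun i => (hy i).1
    have hyφ : ∀ i, supp (D i) (y i) = 1 := fun i => (hy i).2
    have hδ' : ∀ i j, i ≠ j → supp (D i) (y j) = 0 := fun i j hij =>
      hδ (y j) (hyσ j) j (hyφ j) i hij
    constructor
    · rw [Set.mem_add]
      refine ⟨(c • ∑ i, y i, 0), ?_, (c • t, c), ?_, ?_⟩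
      · refine ⟨c * (r:ℝ), mul_nonneg hc hrR.le, ((r:ℝ)⁻¹ • ∑ i, y i, 0), ⟨?_, rfl⟩, ?_⟩
        · show ((r:ℝ)⁻¹ • ∑ i, y i) ∈ σ
          rw [Finset.smul_sum]
          refine hσconvex.sum_mem (fun i _ => by positivity) ?_ (fun i _ => hyσ i)
          rw [Finset.sum_const, Finset.card_univ, Fintype.card_fin, nsmul_eq_mul]
          field_simp
        · have heq : ((c * (r:ℝ)) • ((((r:ℝ)⁻¹ • ∑ i, y i), (0:ℝ)) : V n × ℝ))
              = (c • ∑ i, y i, (0:ℝ)) := by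
            rw [Prod.smul_mk, smul_smul, mul_assoc, mul_inv_cancel₀ (ne_of_gt hrR), mul_one,
              smul_zero]
          exact heq.symm
      · exact ⟨c, hc, (t, 1), ⟨htτ, rfl⟩, by simp [Prod.ext_iff]⟩
      · simp [Prod.ext_iff, smul_add]
    · intro i
      have hps : pair (mi i) (∑ j, y j) = 1 := by
        rw [pair_sum_right, Finset.sum_eq_single i]
        · rw [hmi i (y i) (hyσ i), hyφ i]
        · intro j _ hj
          rw [hmi i (y j) (hyσ j)]
          exact hδ' i j (Ne.symm hj)
        · intro h; exact absurd (Finset.mem_univ i) h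
      have hpt : pair (mi i) t = -(li i) := by have := hli i t htτ; linarith
      show pairP (mi i, li i - 1) (c • (((∑ j, y j) + t, 1) : V n × ℝ)) = 0
      have hsm : c • ((((∑ j, y j) + t), (1:ℝ)) : V n × ℝ) = (c • ((∑ j, y j) + t), c) := by
        simp [Prod.ext_iff]
      rw [hsm]
      simp only [pairP]
      rw [pair_smul_right, pair_add_right, hps, hpt]
      ring

end BB
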